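/- Let B be a finite left regular band monoid (a finite monoid satisfying x·x = x and x·y·x = x·y) and k a field. Then the Jacobson radical of the unital k-algebra kB (i.e., the Jacobson radical Ideal.jacobson ⊥ of the monoid algebra MonoidAlgebra k B) is exactly the set of those r ∈ kB such that for every c ∈ B, Σ_{b ∈ B, Bb = Bc} r(b) = 0, i.e., the kernel of the k-algebra homomorphism kB → kΛ(B) induced by b ↦ Bb. -/

import Mathlib

/-- The principal left ideal of `a` in a semigroup: `Ba = {x * a : x ∈ B}`. -/
def leftIdeal {B : Type*} [Mul B] (a : B) : Set B := {x : B | ∃ y : B, y * a = x}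

set_option linter.unusedSectionVars false
namespace Stmt11

open Finset MonoidAlgebra
open scoped Classical

variable {B : Type*} [Monoid B] [Fintype B] {k : Type*} [Field k]

theorem mem_self (a : B) : a ∈ leftIdeal a := ⟨1, one_mul a⟩

theorem mem_iff (idem : ∀ x : B, x * x = x) {a b : B} :
    a ∈ leftIdeal b ↔ a * b = a := by
  constructor
  · rintro ⟨y, rfl⟩
    rw [mul_assoc, idem]
  · intro h
    exact ⟨a, h⟩

theorem li_mul (idem : ∀ x : B, x * x = x) (lrb : ∀ x y : B, x * y * x = x * y)
    (a b : B) : leftIdeal (a * b) = leftIdeal a ∩ leftIdeal b := by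
  ext x
  constructor
  · rintro ⟨y, rfl⟩
    exact ⟨⟨y * (a * b), by rw [mul_assoc, lrb]⟩, ⟨y * a, by rw [mul_assoc]⟩⟩
  · rintro ⟨⟨y, hy⟩, ⟨z, hz⟩⟩
    refine ⟨x, ?_⟩
    have hxa : x * a = x := by rw [← hy, mul_assoc, idem]
    have hxb : x * b = x := by rw [← hz, mul_assoc, idem]
    rw [← mul_assoc, hxa, hxb]

theorem mul_self_of (idem : ∀ x : B, x * x = x) {w c : B}
    (h : leftIdeal (w * c) = leftIdeal w) : w * c = w := by
  have hw : w * (w * c) = w := (mem_iff idem).mp (h ▸ mem_self w)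
  calc w * c = w * w * c := by rw [idem]
    _ = w := by rw [mul_assoc]; exact hw


/-- The character of `B` at `a`: `b ↦ [a*b = a]`. -/
noncomputable def chi (idem : ∀ x : B, x * x = x) (lrb : ∀ x y : B, x * y * x = x * y)
    (a : B) : B →* k where
  toFun b := if a * b = a then 1 else 0
  map_one' := by simp
  map_mul' x y := by
    have hiff : a * (x * y) = a ↔ (a * x = a ∧ a * y = a) := by
      constructor
      · intro h
        constructor
        · calc a * x = a * (x * y) * x := by rw [h]
            _ = a * (x * y * x) := by rw [mul_assoc]
            _ = a * (x * y) := by rw [lrb]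
            _ = a := h
        · calc a * y = a * (x * y) * y := by rw [h]
            _ = a * (x * (y * y)) := by rw [mul_assoc, mul_assoc]
            _ = a * (x * y) := by rw [idem]
            _ = a := h
      · rintro ⟨h1, h2⟩
        rw [← mul_assoc, h1, h2]
    by_cases h1 : a * x = a <;> by_cases h2 : a * y = a
    · simp [hiff.mpr ⟨h1, h2⟩, h1, h2]
    · have : ¬ a * (x * y) = a := fun h => h2 (hiff.mp h).2
      simp [this, h2]
    · have : ¬ a * (x * y) = a := fun h => h1 (hiff.mp h).1
      simp [this, h1]
    · have : ¬ a * (x * y) = a := fun h => h1 (hiff.mp h).1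
      simp [this, h1]

/-- The character extended to an algebra homomorphism `kB → k`. -/
noncomputable def chiHat (idem : ∀ x : B, x * x = x) (lrb : ∀ x y : B, x * y * x = x * y)
    (a : B) : MonoidAlgebra k B →ₐ[k] k :=
  MonoidAlgebra.lift k k B (chi idem lrb a)

theorem chiHat_apply (idem : ∀ x : B, x * x = x) (lrb : ∀ x y : B, x * y * x = x * y)
    (a : B) (r : MonoidAlgebra k B) :
    chiHat idem lrb a r = ∑ b : B, if a * b = a then r.coeff b else 0 := by
  rw [chiHat, MonoidAlgebra.lift_apply, Finsupp.sum_fintype _ _ (fun i => by simp)]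
  refine Finset.sum_congr rfl fun b _ => ?_
  show r.coeff b • (if a * b = a then (1:k) else 0) = _
  split_ifs <;> simp

theorem chiHat_surj (idem : ∀ x : B, x * x = x) (lrb : ∀ x y : B, x * y * x = x * y)
    (a : B) : Function.Surjective (chiHat (k := k) idem lrb a) := by
  intro x
  refine ⟨MonoidAlgebra.single 1 x, ?_⟩
  rw [chiHat, MonoidAlgebra.lift_single]
  simp

/-- A representative of each class, as a function of the class itself. -/
noncomputable def repC (s : Set B) : B :=
  if h : (Finset.univ.filter (fun x : B => leftIdeal x = s)).Nonempty then h.choose else 1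

/-- A representative of the class of `b`. -/
noncomputable def rep (b : B) : B := repC (leftIdeal b)

theorem rep_eq {b c : B} (h : leftIdeal b = leftIdeal c) : rep b = rep c := by
  rw [rep, rep, h]

theorem leftIdeal_rep (b : B) : leftIdeal (rep b) = leftIdeal b := by
  have h : (Finset.univ.filter (fun x : B => leftIdeal x = leftIdeal b)).Nonempty :=
    ⟨b, by simp⟩
  rw [rep, repC, dif_pos h]
  exact (Finset.mem_filter.mp h.choose_spec).2

theorem rep_rep (b : B) : rep (rep b) = rep b := rep_eq (leftIdeal_rep b)

/-- Grouping a class-invariant sum by classes. -/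
theorem group_sum {M : Type*} [AddCommMonoid M] (f : B → M) (P : B → Prop)
    (hP : ∀ b c : B, leftIdeal b = leftIdeal c → (P b ↔ P c)) :
    ∑ b ∈ Finset.univ.filter P, f b
      = ∑ c ∈ Finset.univ.filter (fun c => P c ∧ rep c = c),
          ∑ b ∈ Finset.univ.filter (fun b => leftIdeal b = leftIdeal c), f b := by
  rw [← Finset.sum_fiberwise (Finset.univ.filter P) rep f]
  have key : ∀ c : B,
      (∑ b ∈ (Finset.univ.filter P).filter (fun b => rep b = c), f b)
        = if P c ∧ rep c = c then
            ∑ b ∈ Finset.univ.filter (fun b => leftIdeal b = leftIdeal c), f b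
          else 0 := by
    intro c
    by_cases hc : P c ∧ rep c = c
    · rw [if_pos hc]
      refine Finset.sum_congr ?_ fun _ _ => rfl
      ext b
      simp only [Finset.mem_filter, Finset.mem_univ, true_and]
      constructor
      · rintro ⟨hPb, hrb⟩
        rw [← leftIdeal_rep b, hrb]
      · intro hbc
        exact ⟨(hP b c hbc).mpr hc.1, by rw [rep_eq hbc, hc.2]⟩
    · rw [if_neg hc]
      rw [Finset.sum_eq_zero]
      intro b hb
      exfalso
      simp only [Finset.mem_filter, Finset.mem_univ, true_and] at hb
      have hbc : leftIdeal b = leftIdeal c := by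
        rw [← leftIdeal_rep b, hb.2]
      exact hc ⟨(hP b c hbc).mp hb.1, by rw [← rep_eq hbc, hb.2]⟩
  calc (∑ c : B, ∑ b ∈ (Finset.univ.filter P).filter (fun b => rep b = c), f b)
      = ∑ c : B, if P c ∧ rep c = c then
            ∑ b ∈ Finset.univ.filter (fun b => leftIdeal b = leftIdeal c), f b
          else 0 := Finset.sum_congr rfl fun c _ => key c
    _ = _ := (Finset.sum_filter _ _).symm

/-- The class sum of the coefficients of `r` at the class of `c`. -/
noncomputable def clsum (r : MonoidAlgebra k B) (c : B) : k :=
  ∑ b : B, if leftIdeal b = leftIdeal c then r.coeff b else 0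

theorem clsum_filter (r : MonoidAlgebra k B) (c : B) :
    clsum r c = ∑ b ∈ Finset.univ.filter (fun b => leftIdeal b = leftIdeal c), r.coeff b := by
  rw [clsum, Finset.sum_filter]

/-- Grouping in `if` form. -/
theorem group_sum' {M : Type*} [AddCommMonoid M] (f : B → M) (P : B → Prop)
    (hP : ∀ b c : B, leftIdeal b = leftIdeal c → (P b ↔ P c)) :
    (∑ b : B, if P b then f b else 0)
      = ∑ c : B, if P c ∧ rep c = c then
          (∑ b : B, if leftIdeal b = leftIdeal c then f b else 0) else 0 := by
  rw [← Finset.sum_filter, ← Finset.sum_filter, group_sum f P hP]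
  exact Finset.sum_congr rfl fun c _ => Finset.sum_filter _ _

/-- If all class sums vanish, then all character sums vanish. -/
theorem dirA (idem : ∀ x : B, x * x = x) {r : MonoidAlgebra k B}
    (hS : ∀ c : B, clsum r c = 0) (a : B) :
    (∑ b : B, if a * b = a then r.coeff b else 0) = 0 := by
  refine Eq.trans (group_sum' (fun b => r.coeff b) (fun b => a * b = a)
    (fun b c h => by
      show a * b = a ↔ a * c = a
      rw [← mem_iff idem (a := a) (b := b), ← mem_iff idem (a := a) (b := c), h])) ?_
  refine Finset.sum_eq_zero fun c _ => ?_
  by_cases h : a * c = a ∧ rep c = c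
  · rw [if_pos h]; exact hS c
  · rw [if_neg h]

/-- If all character sums vanish, then all class sums vanish. -/
theorem dirB (idem : ∀ x : B, x * x = x) {r : MonoidAlgebra k B}
    (hT : ∀ a : B, (∑ b : B, if a * b = a then r.coeff b else 0) = 0) (c : B) :
    clsum r c = 0 := by
  suffices H : ∀ n : ℕ, ∀ c : B,
      Fintype.card B - (leftIdeal c).toFinset.card < n → clsum r c = 0 by
    refine H (Fintype.card B + 1) c (by omega)
  intro n
  induction n with
  | zero => intro c hc; omega
  | succ n ih =>
    intro c hc
    have h0 := hT c
    have hsplit : (∑ b : B, if c * b = c then r.coeff b else 0)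
        = clsum r c + ∑ b : B, if c * b = c ∧ leftIdeal b ≠ leftIdeal c then r.coeff b else 0 := by
      rw [clsum, ← Finset.sum_add_distrib]
      refine Finset.sum_congr rfl fun b _ => ?_
      by_cases h1 : leftIdeal b = leftIdeal c
      · have h2 : c * b = c := (mem_iff idem).mp (h1 ▸ mem_self c)
        simp [h1, h2]
      · by_cases h2 : c * b = c <;> simp [h1, h2]
    have hrest : (∑ b : B, if c * b = c ∧ leftIdeal b ≠ leftIdeal c then r.coeff b else 0) = 0 := by
      refine Eq.trans (Eq.trans ?_ (group_sum' (fun b => r.coeff b)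
        (fun b => c * b = c ∧ leftIdeal b ≠ leftIdeal c)
        (fun b b' h => by
          show (c * b = c ∧ leftIdeal b ≠ leftIdeal c)
            ↔ (c * b' = c ∧ leftIdeal b' ≠ leftIdeal c)
          rw [← mem_iff idem (a := c) (b := b), ← mem_iff idem (a := c) (b := b'), h]))) ?_
      · refine Finset.sum_congr rfl fun b _ => ?_
        by_cases h : c * b = c ∧ leftIdeal b ≠ leftIdeal c <;> simp [h]
      refine Finset.sum_eq_zero fun c' _ => ?_
      by_cases hc' : (c * c' = c ∧ leftIdeal c' ≠ leftIdeal c) ∧ rep c' = c'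
      swap
      · rw [if_neg hc']
      rw [if_pos hc']
      have hsub : leftIdeal c ⊂ leftIdeal c' := by
        have hmem : c ∈ leftIdeal c' := (mem_iff idem).mpr hc'.1.1
        obtain ⟨z, hz⟩ := hmem
        have hss : leftIdeal c ⊆ leftIdeal c' := fun x hx => by
          obtain ⟨y, rfl⟩ := hx
          exact ⟨y * z, by rw [mul_assoc, hz]⟩
        exact ⟨hss, fun h => hc'.1.2 (Set.Subset.antisymm h hss)⟩
      have hcard : (leftIdeal c).toFinset.card < (leftIdeal c').toFinset.card :=
        Finset.card_lt_card (Set.toFinset_ssubset_toFinset.mpr hsub)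
      have hle : (leftIdeal c').toFinset.card ≤ Fintype.card B := by
        rw [← Finset.card_univ]; exact Finset.card_le_univ _
      exact ih c' (by omega)
    rw [hsplit, hrest, add_zero] at h0
    exact h0

/-- The set of differences of basis elements within a class. -/
def Dset (k : Type*) [Field k] (B : Type*) [Monoid B] : Set (MonoidAlgebra k B) :=
  {z | ∃ a b : B, leftIdeal a = leftIdeal b ∧
    z = MonoidAlgebra.single a 1 - MonoidAlgebra.single b 1}

/-- Chain argument: long enough products of class differences vanish. -/
theorem prod_nil (idem : ∀ x : B, x * x = x) (lrb : ∀ x y : B, x * y * x = x * y)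
    (l : List (MonoidAlgebra k B)) :
    ∀ w : B, (∀ x ∈ l, x ∈ Submodule.span k (Dset k B)) →
      (leftIdeal w).toFinset.card ≤ l.length →
      (MonoidAlgebra.single w 1 : MonoidAlgebra k B) * l.prod = 0 := by
  induction l with
  | nil =>
    intro w _ hlen
    exfalso
    have : 0 < (leftIdeal w).toFinset.card :=
      Finset.card_pos.mpr ⟨w, Set.mem_toFinset.mpr (mem_self w)⟩
    simp only [List.length_nil] at hlen
    omega
  | cons x t iht =>
    intro w hmem hlen
    have hx : x ∈ Submodule.span k (Dset k B) := hmem x List.mem_cons_self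
    have ht : ∀ y ∈ t, y ∈ Submodule.span k (Dset k B) :=
      fun y hy => hmem y (List.mem_cons_of_mem x hy)
    rw [List.prod_cons, ← mul_assoc]
    refine Submodule.span_induction
      (p := fun x _ => (MonoidAlgebra.single w 1 * x) * t.prod = 0) ?_ ?_ ?_ ?_ hx
    · rintro z ⟨a, b, hab, rfl⟩
      have hwb_eq : leftIdeal (w * b) = leftIdeal (w * a) := by
        rw [li_mul idem lrb, li_mul idem lrb, hab]
      by_cases h : leftIdeal (w * a) = leftIdeal w
      · have hwa : w * a = w := mul_self_of idem h
        have hwb : w * b = w := mul_self_of idem (hwb_eq.trans h)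
        have hz : MonoidAlgebra.single w (1:k) *
            (MonoidAlgebra.single a 1 - MonoidAlgebra.single b 1) = 0 := by
          rw [mul_sub, MonoidAlgebra.single_mul_single, MonoidAlgebra.single_mul_single,
            hwa, hwb, sub_self]
        rw [hz, zero_mul]
      · have hsub : leftIdeal (w * a) ⊂ leftIdeal w := by
          refine ⟨?_, fun hle => h (Set.Subset.antisymm ?_ hle)⟩
          · rw [li_mul idem lrb]; exact Set.inter_subset_left
          · rw [li_mul idem lrb]; exact Set.inter_subset_left
        have hcard : (leftIdeal (w * a)).toFinset.card < (leftIdeal w).toFinset.card :=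
          Finset.card_lt_card (Set.toFinset_ssubset_toFinset.mpr hsub)
        simp only [List.length_cons] at hlen
        have h1 : MonoidAlgebra.single (w * a) (1:k) * t.prod = 0 :=
          iht (w * a) ht (by omega)
        have h2 : MonoidAlgebra.single (w * b) (1:k) * t.prod = 0 :=
          iht (w * b) ht (by rw [hwb_eq]; omega)
        rw [mul_sub, MonoidAlgebra.single_mul_single, MonoidAlgebra.single_mul_single,
          sub_mul, mul_one, h1, h2, sub_zero]
    · show MonoidAlgebra.single w (1:k) * 0 * t.prod = 0
      rw [mul_zero, zero_mul]
    · intro y z _ _ hy hz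
      show MonoidAlgebra.single w (1:k) * (y + z) * t.prod = 0
      rw [mul_add, add_mul, hy, hz, add_zero]
    · intro c y _ hy
      show MonoidAlgebra.single w (1:k) * (c • y) * t.prod = 0
      rw [mul_smul_comm, smul_mul_assoc, hy, smul_zero]

/-- Elements with vanishing class sums lie in the span of class differences. -/
theorem mem_span_D {r : MonoidAlgebra k B} (hS : ∀ c : B, clsum r c = 0) :
    r ∈ Submodule.span k (Dset k B) := by
  have hrepr : r = (∑ b : B, r.coeff b • (MonoidAlgebra.single b (1:k)
        - MonoidAlgebra.single (rep b) 1))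
      + ∑ b : B, r.coeff b • MonoidAlgebra.single (rep b) (1:k) := by
    rw [← Finset.sum_add_distrib]
    have : r = ∑ b : B, MonoidAlgebra.single b (r.coeff b) := by
      conv_lhs => rw [← MonoidAlgebra.sum_coeff_single r]
      rw [Finsupp.sum_fintype _ _ (fun i => MonoidAlgebra.single_zero i)]
    conv_lhs => rw [this]
    refine Finset.sum_congr rfl fun b _ => ?_
    rw [smul_sub, sub_add_cancel, MonoidAlgebra.smul_single', mul_one]
  have hzero : (∑ b : B, r.coeff b • MonoidAlgebra.single (rep b) (1:k)) = 0 := by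
    rw [← Finset.sum_fiberwise Finset.univ rep (fun b => r.coeff b • MonoidAlgebra.single (rep b) (1:k))]
    refine Finset.sum_eq_zero fun c _ => ?_
    have hinner : ∀ b ∈ Finset.univ.filter (fun b => rep b = c),
        r.coeff b • MonoidAlgebra.single (rep b) (1:k) = r.coeff b • MonoidAlgebra.single c (1:k) := by
      intro b hb
      simp only [Finset.mem_filter, Finset.mem_univ, true_and] at hb
      rw [hb]
    rw [Finset.sum_congr rfl hinner, ← Finset.sum_smul]
    by_cases hcc : rep c = c
    · have hfe : Finset.univ.filter (fun b => rep b = c)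
          = Finset.univ.filter (fun b => leftIdeal b = leftIdeal c) := by
        ext b
        simp only [Finset.mem_filter, Finset.mem_univ, true_and]
        constructor
        · intro hb; rw [← leftIdeal_rep b, hb]
        · intro hb; rw [rep_eq hb, hcc]
      rw [hfe, ← clsum_filter, hS c, zero_smul]
    · have hfe : Finset.univ.filter (fun b => rep b = c) = ∅ := by
        ext b
        simp only [Finset.mem_filter, Finset.mem_univ, true_and, Finset.notMem_empty,
          iff_false]
        intro hb
        exact hcc (by rw [← hb, rep_rep])
      rw [hfe, Finset.sum_empty, zero_smul]
  rw [hrepr, hzero, add_zero]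
  refine Submodule.sum_mem _ fun b _ => Submodule.smul_mem _ _ ?_
  exact Submodule.subset_span ⟨b, rep b, (leftIdeal_rep b).symm, rfl⟩

/-- Elements with vanishing class sums are nilpotent. -/
theorem pow_eq_zero (idem : ∀ x : B, x * x = x) (lrb : ∀ x y : B, x * y * x = x * y)
    {r : MonoidAlgebra k B} (hS : ∀ c : B, clsum r c = 0) :
    r ^ Fintype.card B = 0 := by
  have h := prod_nil idem lrb (List.replicate (Fintype.card B) r) (1 : B)
    (fun x hx => by rw [List.eq_of_mem_replicate hx]; exact mem_span_D hS)
    (by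
      rw [List.length_replicate]
      rw [← Finset.card_univ]
      exact Finset.card_le_univ _)
  rw [List.prod_replicate] at h
  rw [← MonoidAlgebra.one_def] at h
  rwa [one_mul] at h

end Stmt11

open Classical in
/-- For a finite left regular band monoid `B` and a field `k`, the Jacobson radical of
the monoid algebra `kB` is the kernel of the support map: the set of elements whose
coefficients sum to zero over each class `{b : Bb = Bc}`. -/
theorem stmt11 {B : Type*} [Monoid B] [Fintype B] {k : Type*} [Field k]
    (idem : ∀ x : B, x * x = x) (lrb : ∀ x y : B, x * y * x = x * y) :
    ((Ideal.jacobson (⊥ : Ideal (MonoidAlgebra k B)) : Ideal (MonoidAlgebra k B)) :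
        Set (MonoidAlgebra k B)) =
      {r : MonoidAlgebra k B | ∀ c : B,
        (∑ b : B, if leftIdeal b = leftIdeal c then r.coeff b else 0) = 0} := by
  ext r
  simp only [SetLike.mem_coe, Set.mem_setOf_eq]
  have hjac : Ideal.jacobson (⊥ : Ideal (MonoidAlgebra k B))
      = sInf {J : Ideal (MonoidAlgebra k B) | ⊥ ≤ J ∧ J.IsMaximal} := rfl
  constructor
  · intro hr c
    have hk : ∀ a : B, Stmt11.chiHat idem lrb a r = 0 := by
      intro a
      have hmax : (RingHom.ker (Stmt11.chiHat (k := k) idem lrb a)).IsMaximal :=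
        RingHom.ker_isMaximal_of_surjective _ (Stmt11.chiHat_surj idem lrb a)
      have hle : Ideal.jacobson (⊥ : Ideal (MonoidAlgebra k B))
          ≤ RingHom.ker (Stmt11.chiHat (k := k) idem lrb a) := by
        rw [hjac]; exact sInf_le ⟨bot_le, hmax⟩
      exact RingHom.mem_ker.mp (hle hr)
    exact Stmt11.dirB idem
      (fun a => by rw [← Stmt11.chiHat_apply idem lrb a r]; exact hk a) c
  · intro hr
    have hS : ∀ c : B, Stmt11.clsum r c = 0 := hr
    rw [hjac]
    refine Submodule.mem_sInf.mpr ?_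
    rintro J ⟨-, hmax⟩
    by_contra hrJ
    have hlt : J < J ⊔ Ideal.span {r} := by
      refine lt_of_le_of_ne le_sup_left fun h => hrJ ?_
      have hmem : r ∈ J ⊔ Ideal.span {r} :=
        (le_sup_right : Ideal.span {r} ≤ _) (Ideal.subset_span rfl)
      rwa [← h] at hmem
    have htop : J ⊔ Ideal.span {r} = ⊤ := hmax.out.2 _ hlt
    have h1 : (1 : MonoidAlgebra k B) ∈ J ⊔ Ideal.span {r} := htop ▸ Submodule.mem_top
    obtain ⟨m, hm, y, hy, hsum⟩ := Submodule.mem_sup.mp h1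
    obtain ⟨z, rfl⟩ := Submodule.mem_span_singleton.mp hy
    have hzr : ∀ c : B, Stmt11.clsum (z * r) c = 0 := by
      refine fun c => Stmt11.dirB idem (fun a => ?_) c
      rw [← Stmt11.chiHat_apply idem lrb a, map_mul]
      have h0 : Stmt11.chiHat (k := k) idem lrb a r = 0 := by
        rw [Stmt11.chiHat_apply]; exact Stmt11.dirA idem hS a
      rw [h0, mul_zero]
    have hnil : IsNilpotent (z * r) :=
      ⟨Fintype.card B, Stmt11.pow_eq_zero idem lrb hzr⟩
    have hunit : IsUnit m := by
      have hm1 : m = 1 - z * r := by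
        rw [← hsum, smul_eq_mul, add_sub_cancel_right]
      rw [hm1]
      exact hnil.isUnit_one_sub
    exact hmax.out.1 (Ideal.eq_top_of_isUnit_mem J hm hunit)
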